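/- For every v ∈ ℝ one has v·H*(v) ≤ j(2v) − j(v), where j(r) = ∫₀^r H*(p) dp. -/

import Mathlib

open Set

/-- The Legendre conjugate of `H = h + indicator of [0,∞)`:
`H*(p) = sup { p·u − h(u) : u ∈ [0,∞) }`. -/
noncomputable def Hstar (h : ℝ → ℝ) (p : ℝ) : ℝ :=
  sSup ((fun u => p * u - h u) '' Set.Ici (0 : ℝ))

/-- The potential of `H*`: `j(r) = ∫₀ʳ H*(p) dp`. -/
noncomputable def jpot (h : ℝ → ℝ) (r : ℝ) : ℝ :=
  ∫ p in (0 : ℝ)..r, Hstar h p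

lemma hstar_nonempty (h : ℝ → ℝ) (p : ℝ) :
    ((fun u => p * u - h u) '' Set.Ici (0 : ℝ)).Nonempty :=
  ⟨_, Set.mem_image_of_mem _ Set.self_mem_Ici⟩

lemma hstar_bddAbove (h : ℝ → ℝ) (α₁ α₂ : ℝ) (hα₁ : 0 < α₁)
    (hlb : ∀ u : ℝ, α₁ * u ^ 2 + α₂ ≤ h u) (p : ℝ) :
    BddAbove ((fun u => p * u - h u) '' Set.Ici (0 : ℝ)) := by
  refine ⟨p ^ 2 / (4 * α₁) - α₂, ?_⟩
  rintro x ⟨u, hu, rfl⟩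
  have h1 := hlb u
  have h2 : p * u - (α₁ * u ^ 2 + α₂) ≤ p ^ 2 / (4 * α₁) - α₂ := by
    rw [div_sub' (by positivity), le_div_iff₀ (by positivity)]
    nlinarith [sq_nonneg (p - 2 * α₁ * u)]
  simp only
  linarith

lemma hstar_mono (h : ℝ → ℝ) (α₁ α₂ : ℝ) (hα₁ : 0 < α₁)
    (hlb : ∀ u : ℝ, α₁ * u ^ 2 + α₂ ≤ h u) : Monotone (Hstar h) := by
  intro p q hpq
  apply csSup_le (hstar_nonempty h p)
  rintro x ⟨u, hu, rfl⟩
  calc p * u - h u ≤ q * u - h u := by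
        have : p * u ≤ q * u := mul_le_mul_of_nonneg_right hpq hu
        linarith
    _ ≤ Hstar h q := le_csSup (hstar_bddAbove h α₁ α₂ hα₁ hlb q)
        ⟨u, hu, rfl⟩

theorem v_hstar_le_j_two_v_sub_j_v
    (h : ℝ → ℝ) (hconv : ConvexOn ℝ Set.univ h) (hcont : Continuous h)
    (α₁ α₂ : ℝ) (hα₁ : 0 < α₁) (hα₂ : 0 ≤ α₂)
    (hlb : ∀ u : ℝ, α₁ * u ^ 2 + α₂ ≤ h u) (v : ℝ) :
    v * Hstar h v ≤ jpot h (2 * v) - jpot h v := by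
  have hmono := hstar_mono h α₁ α₂ hα₁ hlb
  have hint : ∀ a b : ℝ, IntervalIntegrable (Hstar h) MeasureTheory.volume a b :=
    fun a b => hmono.intervalIntegrable
  have hdiff : jpot h (2 * v) - jpot h v = ∫ p in v..(2 * v), Hstar h p := by
    unfold jpot
    rw [← intervalIntegral.integral_add_adjacent_intervals (hint 0 v) (hint v (2 * v))]
    ring
  rw [hdiff]
  rcases le_or_gt 0 v with hv | hv
  · have hle : v ≤ 2 * v := by linarith
    calc v * Hstar h v = ∫ _ in v..(2 * v), Hstar h v := by
          rw [intervalIntegral.integral_const, smul_eq_mul]; ring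
      _ ≤ ∫ p in v..(2 * v), Hstar h p := by
          apply intervalIntegral.integral_mono_on hle
            intervalIntegrable_const (hint v (2 * v))
          intro x hx
          exact hmono hx.1
  · have hle : 2 * v ≤ v := by linarith
    rw [intervalIntegral.integral_symm (2 * v) v]
    have : (∫ p in (2 * v)..v, Hstar h p) ≤ ∫ _ in (2 * v)..v, Hstar h v := by
      apply intervalIntegral.integral_mono_on hle (hint (2 * v) v)
        intervalIntegrable_const
      intro x hx
      exact hmono hx.2
    rw [intervalIntegral.integral_const, smul_eq_mul] at this
    linarith [this]
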